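/- arXiv:1502.01797 — 3 statements merged into one kernel-verified Lean document; each statement's English description precedes it below -/
import Mathlib

section
/- Suppose V is finite, L : V → F injective (identify V ⊆ F), G strongly connected with vertex set V, with (b^{-1}, a^{-1}) ∈ E whenever (a,b) ∈ E, and suppose there exist v,w,u ∈ V with (v,w), (u,w), (u,v^{-1}) ∈ E. Then G contains a good subgraph: there exist vertices u', w' and directed paths p, q, p*, q* of equal length k such that u'pw', u'qw', pq*p, qp*q are directed paths in G, and L(p*) = L(p)^{-1}, L(q*) = L(q)^{-1}. -/
private lemma glue_aux {α} {R : α → α → Prop} {a b : α} {l : List α} (hne : l ≠ [])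
    (h : l.Chain' R) (ha : ∀ x ∈ l.head?, R a x) (hb : ∀ x ∈ l.getLast?, R x b) :
    (a :: (l ++ [b])).Chain' R := by
  have heq : (a :: (l ++ [b])) = ([a] ++ l) ++ [b] := by simp
  unfold List.Chain'
  rw [heq, List.isChain_append, List.isChain_append]
  refine ⟨⟨by simp, h, ?_⟩, by simp, ?_⟩
  · intro x hx y hy; simp at hx; subst hx; exact ha y hy
  · intro x hx y hy
    simp only [List.head?_cons, Option.mem_def, Option.some.injEq] at hy; subst hy
    rw [List.getLast?_append] at hx
    rcases l.eq_nil_or_concat with rfl | ⟨l', c, rfl⟩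
    · exact absurd rfl hne
    · rw [List.concat_eq_append, List.getLast?_concat] at hx
      refine hb x ?_
      rw [List.concat_eq_append, List.getLast?_concat]
      simpa using hx

private lemma cycle_aux {α} {R : α → α → Prop} {l : List α} (h : l.Chain' R)
    (hc : ∀ x ∈ l.getLast?, ∀ y ∈ l.head?, R x y) :
    (l ++ l ++ l).Chain' R := by
  unfold List.Chain'
  rw [List.isChain_append, List.isChain_append]
  refine ⟨⟨h, h, hc⟩, h, ?_⟩
  intro x hx y hy
  rw [List.getLast?_append] at hx
  rcases l.eq_nil_or_concat with rfl | ⟨l', c, rfl⟩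
  · simp at hy
  · rw [List.concat_eq_append, List.getLast?_concat] at hx
    refine hc x ?_ y hy
    rw [List.concat_eq_append, List.getLast?_concat]
    simpa using hx

/-- Let `F` be a free group, `V ⊆ F` a finite set of vertices of a directed
graph `G = (V,E)` which is strongly connected, closed under the edge-inverse condition
(`(a,b) ∈ E → (b⁻¹,a⁻¹) ∈ E`), and suppose there exist `v,w,u ∈ V` with
`(v,w), (u,w), (u,v⁻¹) ∈ E`. Then `G` contains a good subgraph: there are vertices
`u', w'` and directed paths `p, q, p*, q*` of a common length `k ≥ 1` such that
`u'pw', u'qw', pq*p, qp*q` are directed paths in `G` and the labels satisfy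
`L(p*) = L(p)⁻¹` and `L(q*) = L(q)⁻¹` (labels being products in the free group). -/
theorem stmt6 {β : Type*} (V : Finset (FreeGroup β))
    (E : FreeGroup β → FreeGroup β → Prop)
    (hEV : ∀ a b, E a b → a ∈ V ∧ b ∈ V)
    (hconn : ∀ x ∈ V, ∀ y ∈ V, ∃ l : List (FreeGroup β),
      (x :: l).Chain' E ∧ (x :: l).getLast (by simp) = y)
    (hinv : ∀ a b, E a b → E b⁻¹ a⁻¹)
    (v w u : FreeGroup β) (hvw : E v w) (huw : E u w) (huv : E u v⁻¹) :
    ∃ (k : ℕ) (u' w' : FreeGroup β) (p q ps qs : List (FreeGroup β)),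
      1 ≤ k ∧ p.length = k ∧ q.length = k ∧ ps.length = k ∧ qs.length = k ∧
      u' ∈ V ∧ w' ∈ V ∧
      (u' :: (p ++ [w'])).Chain' E ∧ (u' :: (q ++ [w'])).Chain' E ∧
      (p ++ qs ++ p).Chain' E ∧ (q ++ ps ++ q).Chain' E ∧
      ps.prod = p.prod⁻¹ ∧ qs.prod = q.prod⁻¹ := by
  have hvinvV : v⁻¹ ∈ V := (hEV u v⁻¹ huv).2
  have hwv : E w⁻¹ v⁻¹ := hinv v w hvw
  have hwinvV : w⁻¹ ∈ V := (hEV _ _ hwv).1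
  obtain ⟨l, hl, hlast⟩ := hconn v⁻¹ hvinvV w⁻¹ hwinvV
  set p : List (FreeGroup β) := v⁻¹ :: l with hp
  have hpne : p ≠ [] := by simp [hp]
  have hheadp : p.head? = some v⁻¹ := rfl
  have hlastp : p.getLast? = some w⁻¹ := by
    rw [List.getLast?_eq_getLast hpne]; exact congrArg some hlast
  set q : List (FreeGroup β) := p.reverse.map (·⁻¹) with hq
  have hqchain : q.Chain' E := by
    unfold List.Chain'
    rw [hq, List.isChain_map, List.isChain_reverse]
    exact hl.imp (fun a b hab => hinv a b hab)
  have hheadq : q.head? = some w := by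
    rw [hq, List.head?_map, List.head?_reverse, hlastp]; simp
  have hlastq : q.getLast? = some v := by
    rw [hq, List.getLast?_map, List.getLast?_reverse, hheadp]; simp
  have hlen : q.length = p.length := by simp [hq]
  have huinvV : u⁻¹ ∈ V := (hEV _ _ (hinv u w huw)).2
  refine ⟨p.length, u, u⁻¹, p, q, q, p, ?_, rfl, hlen, hlen, rfl,
    (hEV u w huw).1, huinvV, ?_, ?_, ?_, ?_, ?_, ?_⟩
  · rw [hp]; simp [Nat.succ_le_succ]
  · -- u :: (p ++ [u⁻¹])
    refine glue_aux hpne hl ?_ ?_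
    · intro x hx; rw [hheadp] at hx; simp at hx; subst hx; exact huv
    · intro x hx; rw [hlastp] at hx; simp at hx; subst hx; exact hinv u w huw
  · -- u :: (q ++ [u⁻¹])
    have hqne : q ≠ [] := by
      intro h; rw [h] at hheadq; simp at hheadq
    refine glue_aux hqne hqchain ?_ ?_
    · intro x hx; rw [hheadq] at hx; simp at hx; subst hx; exact huw
    · intro x hx; rw [hlastq] at hx; simp at hx; subst hx; simpa using hinv u v⁻¹ huv
  · -- p ++ p ++ p
    refine cycle_aux hl ?_
    intro x hx y hy; rw [hlastp] at hx; rw [hheadp] at hy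
    simp at hx hy; subst hx; subst hy; exact hwv
  · -- q ++ q ++ q
    refine cycle_aux hqchain ?_
    intro x hx y hy; rw [hlastq] at hx; rw [hheadq] at hy
    simp at hx hy; subst hx; subst hy; exact hvw
  · -- q.prod = p.prod⁻¹
    rw [hq, List.map_reverse, ← List.prod_inv_reverse]
  · -- p.prod = q.prod⁻¹
    rw [hq, List.map_reverse, ← List.prod_inv_reverse, inv_inv]
end

section
/- In a finite strongly connected directed graph G whose period (the gcd of all cycle lengths) is 1, there exists a natural number k such that for every ordered pair of vertices (x,y) there is a directed path from x to y of length exactly k. -/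
section stmt7aux
variable {V : Type*} (E : V → V → Prop) (pathN : ℕ → V → V → Prop)
    (hpath : ∀ (n : ℕ) (x y : V), pathN n x y ↔
      ∃ f : Fin (n + 1) → V, f 0 = x ∧ f (Fin.last n) = y ∧
        ∀ i : Fin n, E (f i.castSucc) (f i.succ))

include hpath

theorem stmt7_zero (x y : V) : pathN 0 x y ↔ x = y := by
  rw [hpath]
  constructor
  · rintro ⟨f, h0, hl, -⟩
    rw [← h0, ← hl]; rfl
  · rintro rfl
    exact ⟨fun _ => x, rfl, rfl, fun i => i.elim0⟩

theorem stmt7_snoc {n : ℕ} {x y z : V} (h : pathN n x y) (he : E y z) :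
    pathN (n + 1) x z := by
  rw [hpath] at h ⊢
  obtain ⟨f, h0, hl, hE⟩ := h
  refine ⟨Fin.snoc f z, ?_, ?_, ?_⟩
  · have h00 : ((0 : Fin (n+1)).castSucc) = (0 : Fin (n+1+1)) := by simp
    rw [← h00, Fin.snoc_castSucc, h0]
  · simp
  · intro i
    refine Fin.lastCases ?_ ?_ i
    · rw [Fin.succ_last, Fin.snoc_last, Fin.snoc_castSucc, hl]
      exact he
    · intro j
      rw [Fin.succ_castSucc, Fin.snoc_castSucc, Fin.snoc_castSucc]
      exact hE j

theorem stmt7_unsnoc {n : ℕ} {x z : V} (h : pathN (n + 1) x z) :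
    ∃ y, pathN n x y ∧ E y z := by
  rw [hpath] at h
  obtain ⟨f, h0, hl, hE⟩ := h
  refine ⟨f (Fin.last n).castSucc, ?_, ?_⟩
  · rw [hpath]
    refine ⟨fun i => f i.castSucc, ?_, rfl, ?_⟩
    · simpa using h0
    · intro i
      have := hE i.castSucc
      rwa [Fin.succ_castSucc] at this
  · have := hE (Fin.last n)
    rwa [Fin.succ_last, hl] at this

theorem stmt7_trans {m n : ℕ} {x y z : V} (h1 : pathN m x y) (h2 : pathN n y z) :
    pathN (m + n) x z := by
  induction n generalizing z with
  | zero => rwa [(stmt7_zero E pathN hpath y z).mp h2] at h1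
  | succ n ih =>
    obtain ⟨w, hw, he⟩ := stmt7_unsnoc E pathN hpath h2
    exact stmt7_snoc E pathN hpath (ih hw) he

end stmt7aux

/-- In a finite strongly connected directed graph whose period (the gcd of
all directed cycle lengths) is `1`, there is a `k` such that every ordered pair of
vertices is joined by a directed path of length exactly `k`. -/
theorem stmt7 {V : Type*} [Fintype V] (E : V → V → Prop)
    (pathN : ℕ → V → V → Prop)
    (hpath : ∀ (n : ℕ) (x y : V), pathN n x y ↔
      ∃ f : Fin (n + 1) → V, f 0 = x ∧ f (Fin.last n) = y ∧
        ∀ i : Fin n, E (f i.castSucc) (f i.succ))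
    (hconn : ∀ x y : V, ∃ n : ℕ, pathN n x y)
    (hperiod : ∀ d : ℕ, (∀ (n : ℕ) (x : V), 1 ≤ n → pathN n x x → d ∣ n) → d = 1) :
    ∃ k : ℕ, ∀ x y : V, pathN k x y := by
  classical
  by_cases hV : Nonempty V
  case neg => exact ⟨0, fun x y => absurd ⟨x⟩ hV⟩
  obtain ⟨v⟩ := hV
  have htrans : ∀ {m n : ℕ} {x y z : V}, pathN m x y → pathN n y z → pathN (m + n) x z :=
    fun h1 h2 => stmt7_trans E pathN hpath h1 h2
  have hzero : pathN 0 v v := (stmt7_zero E pathN hpath v v).mpr rfl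
  -- any common divisor of the closed-walk lengths at `v` is 1
  have hdvd : ∀ d : ℕ, (∀ t : ℕ, pathN t v v → d ∣ t) → d = 1 := by
    intro d hd
    apply hperiod
    intro n x hn hnx
    obtain ⟨a, ha⟩ := hconn v x
    obtain ⟨b, hb⟩ := hconn x v
    have h1 : d ∣ a + n + b := hd _ (htrans (htrans ha hnx) hb)
    have h2 : d ∣ a + b := hd _ (htrans ha hb)
    have h3 := Nat.dvd_sub h1 h2
    have h4 : a + n + b - (a + b) = n := by omega
    rwa [h4] at h3
  -- the ℤ-subgroup generated by closed-walk lengths at `v`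
  set T : Set ℤ := ((↑) : ℕ → ℤ) '' {n : ℕ | pathN n v v} with hT
  obtain ⟨g, hg⟩ := Int.subgroup_cyclic (AddSubgroup.closure T)
  have hgdvd : ∀ t : ℕ, pathN t v v → g ∣ (t : ℤ) := by
    intro t ht
    have : (t : ℤ) ∈ AddSubgroup.closure T := AddSubgroup.subset_closure ⟨t, ht, rfl⟩
    rw [hg, AddSubgroup.mem_closure_singleton] at this
    obtain ⟨n, hn⟩ := this
    exact ⟨n, by rw [← hn, smul_eq_mul, mul_comm]⟩
  have hg1 : g.natAbs = 1 := by
    apply hdvd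
    intro t ht
    have := hgdvd t ht
    rwa [← Int.natAbs_dvd_natAbs, Int.natAbs_natCast] at this
  have hone : (1 : ℤ) ∈ AddSubgroup.closure T := by
    rw [hg, AddSubgroup.mem_closure_singleton]
    exact ⟨g, by rcases Int.natAbs_eq_iff.mp hg1 with h | h <;> rw [h] <;> simp⟩
  -- every element of the subgroup is a difference of two walk lengths
  have hdiff : ∀ z : ℤ, z ∈ AddSubgroup.closure T →
      ∃ a b : ℕ, pathN a v v ∧ pathN b v v ∧ z = (a : ℤ) - b := by
    intro z hz
    induction hz using AddSubgroup.closure_induction with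
    | mem x hx =>
      obtain ⟨a, ha, rfl⟩ := hx
      exact ⟨a, 0, ha, hzero, by simp⟩
    | zero => exact ⟨0, 0, hzero, hzero, by simp⟩
    | add x y hx hy ihx ihy =>
      obtain ⟨a, b, ha, hb, rfl⟩ := ihx
      obtain ⟨c, d, hc, hd, rfl⟩ := ihy
      exact ⟨a + c, b + d, htrans ha hc, htrans hb hd, by push_cast; ring⟩
    | neg x hx ihx =>
      obtain ⟨a, b, ha, hb, rfl⟩ := ihx
      exact ⟨b, a, hb, ha, by ring⟩
  obtain ⟨a, b, ha, hb, hab⟩ := hdiff 1 hone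
  -- so there are walks of consecutive lengths m, m+1 at v
  have haeq : a = b + 1 := by omega
  set m := b with hm
  have hm1 : pathN (m + 1) v v := haeq ▸ ha
  -- multiples of walk lengths are walk lengths
  have hmul : ∀ (c t : ℕ), pathN t v v → pathN (c * t) v v := by
    intro c t ht
    induction c with
    | zero => simpa using hzero
    | succ c ih =>
      have := htrans ih ht
      rwa [show c * t + t = (c + 1) * t by ring] at this
  -- all n ≥ m*m are walk lengths at v
  have hbig : ∀ n : ℕ, m * m ≤ n → pathN n v v := by
    intro n hn
    rcases Nat.eq_zero_or_pos m with hm0 | hm0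
    · have := hmul n (m + 1) hm1
      rwa [hm0, show n * (0 + 1) = n by ring] at this
    · set q := n / m with hq
      set r := n % m with hr
      have hrm : r < m := Nat.mod_lt _ hm0
      have hqm : m ≤ q := (Nat.le_div_iff_mul_le hm0).mpr (by nlinarith)
      have hdm := Nat.div_add_mod n m
      set c := q - r with hc
      have hqc : q = c + r := by omega
      have hneq : n = r * (m + 1) + c * m := by
        rw [← hdm, ← hq, ← hr, hqc]; ring
      have := htrans (hmul r (m + 1) hm1) (hmul c m hb)
      rwa [← hneq] at this
  -- choose connecting path lengths and take k large enough
  set A : V → ℕ := fun x => (hconn x v).choose with hA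
  set B : V → ℕ := fun y => (hconn v y).choose with hB
  set F : ℕ := Finset.univ.sup (fun p : V × V => A p.1 + B p.2) with hF
  refine ⟨m * m + F, fun x y => ?_⟩
  have hAB : A x + B y ≤ F := Finset.le_sup (f := fun p : V × V => A p.1 + B p.2)
    (Finset.mem_univ (x, y))
  set t : ℕ := m * m + F - A x - B y with ht2
  have hpt : pathN t v v := hbig t (by omega)
  have := htrans (htrans (hconn x v).choose_spec hpt) (hconn v y).choose_spec
  rwa [show A x + t + B y = m * m + F by omega] at this
end

section
/- Let T be a measure-preserving transformation of a probability space (X,μ), k ≥ 1, and let F_k denote the σ-algebra of T^k-invariant measurable sets and F_1 the σ-algebra of T-invariant measurable sets. Then for every f ∈ L^1(X,μ), (1/k)·Σ_{i=0}^{k-1} E[f ∘ T^i | F_k] = E[f | F_1]. -/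
open MeasureTheory

/-- The σ-algebra of `T`-invariant measurable sets. -/
def invSigma {X : Type*} (m0 : MeasurableSpace X) (T : X → X) : MeasurableSpace X where
  MeasurableSet' s := MeasurableSet[m0] s ∧ T ⁻¹' s = s
  measurableSet_empty := ⟨MeasurableSet.empty, rfl⟩
  measurableSet_compl := fun s hs => ⟨hs.1.compl, by rw [Set.preimage_compl, hs.2]⟩
  measurableSet_iUnion := fun f hf =>
    ⟨MeasurableSet.iUnion fun i => (hf i).1, by
      simp only [Set.preimage_iUnion]
      exact Set.iUnion_congr fun i => (hf i).2⟩


open Filter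

section aux
variable {X : Type*} {m0 : MeasurableSpace X} {μ : Measure X} {T S : X → X}

lemma invSigma_le (m0 : MeasurableSpace X) (T : X → X) : invSigma m0 T ≤ m0 :=
  fun _ hs => hs.1

lemma invSigma_le_iterate (m0 : MeasurableSpace X) (T : X → X) (k : ℕ) :
    invSigma m0 T ≤ invSigma m0 (T^[k]) := by
  intro s hs
  refine ⟨hs.1, ?_⟩
  induction k with
  | zero => rfl
  | succ n ih => rw [Function.iterate_succ, Set.preimage_comp, ih, hs.2]

lemma integral_comp_mp (hS : MeasurePreserving S μ μ) {u : X → ℝ}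
    (hu : AEStronglyMeasurable u μ) : ∫ x, u (S x) ∂μ = ∫ x, u x ∂μ := by
  rw [← integral_map hS.measurable.aemeasurable (by rwa [hS.map_eq]), hS.map_eq]

lemma setIntegral_comp_mp (hS : MeasurePreserving S μ μ) {B : Set X} (hB : MeasurableSet B)
    {u : X → ℝ} (hu : AEStronglyMeasurable u μ) :
    ∫ x in S ⁻¹' B, u (S x) ∂μ = ∫ x in B, u x ∂μ := by
  rw [← integral_indicator hB, ← integral_indicator (hS.measurable hB),
    ← integral_comp_mp hS (hu.indicator hB)]
  congr 1


lemma measurable_invSigma_iterate (hT : Measurable T) (k : ℕ) :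
    @Measurable X X (invSigma m0 (T^[k])) (invSigma m0 (T^[k])) T := by
  intro s hs
  refine ⟨hT hs.1, ?_⟩
  rw [← Set.preimage_comp, ← Function.iterate_succ', Function.iterate_succ,
    Set.preimage_comp, hs.2]

end aux

section lem
variable {X : Type*} {m0 : MeasurableSpace X} {μ : Measure X} [IsFiniteMeasure μ] {T : X → X}

lemma condexp_comp_ae (hT : MeasurePreserving T μ μ) {k : ℕ} (hk : 1 ≤ k)
    {u : X → ℝ} (hu : Integrable u μ) :
    (μ[u | invSigma m0 (T^[k])]) ∘ T =ᵐ[μ] μ[u ∘ T | invSigma m0 (T^[k])] := by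
  have hmk : invSigma m0 (T^[k]) ≤ m0 := invSigma_le m0 (T^[k])
  refine ae_eq_condExp_of_forall_setIntegral_eq hmk ((hT.integrable_comp hu.aestronglyMeasurable).2 hu)
    (fun s _ _ => ((hT.integrable_comp (stronglyMeasurable_condExp.mono (invSigma_le m0 (T^[k]))).aestronglyMeasurable).2 integrable_condExp).integrableOn)
    (fun s hs _ => ?_)
    ((stronglyMeasurable_condExp.comp_measurable
      (measurable_invSigma_iterate hT.measurable k)).aestronglyMeasurable)
  set C : Set X := T^[k-1] ⁻¹' s with hC_def
  have hC0 : MeasurableSet C := (hT.measurable.iterate (k-1)) hs.1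
  have hC : MeasurableSet[invSigma m0 (T^[k])] C := by
    refine ⟨hC0, ?_⟩
    rw [← Set.preimage_comp, ← Function.iterate_add, Nat.add_comm, Function.iterate_add,
      Set.preimage_comp, hs.2]
  have hTC : T ⁻¹' C = s := by
    rw [hC_def, ← Set.preimage_comp, ← Function.iterate_succ, Nat.succ_eq_add_one, Nat.sub_add_cancel hk, hs.2]
  calc ∫ x in s, ((μ[u | invSigma m0 (T^[k])]) ∘ T) x ∂μ
      = ∫ x in T ⁻¹' C, (μ[u | invSigma m0 (T^[k])]) (T x) ∂μ := by rw [hTC]; rfl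
    _ = ∫ x in C, (μ[u | invSigma m0 (T^[k])]) x ∂μ :=
        setIntegral_comp_mp hT hC0 (stronglyMeasurable_condExp.mono hmk).aestronglyMeasurable
    _ = ∫ x in C, u x ∂μ := setIntegral_condExp hmk hu hC
    _ = ∫ x in T ⁻¹' C, u (T x) ∂μ := (setIntegral_comp_mp hT hC0 hu.aestronglyMeasurable).symm
    _ = ∫ x in s, (u ∘ T) x ∂μ := by rw [hTC]; rfl

lemma condexp_iterate_ae (hT : MeasurePreserving T μ μ) (k : ℕ)
    {u : X → ℝ} (hu : Integrable u μ) :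
    μ[u | invSigma m0 (T^[k])] =ᵐ[μ] μ[u ∘ T^[k] | invSigma m0 (T^[k])] := by
  have hmk : invSigma m0 (T^[k]) ≤ m0 := invSigma_le m0 (T^[k])
  refine ae_eq_condExp_of_forall_setIntegral_eq hmk (((hT.iterate k).integrable_comp hu.aestronglyMeasurable).2 hu)
    (fun s _ _ => integrable_condExp.integrableOn) (fun s hs _ => ?_)
    stronglyMeasurable_condExp.aestronglyMeasurable
  rw [setIntegral_condExp hmk hu hs]
  calc ∫ x in s, u x ∂μ
      = ∫ x in T^[k] ⁻¹' s, u (T^[k] x) ∂μ :=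
        (setIntegral_comp_mp (hT.iterate k) hs.1 hu.aestronglyMeasurable).symm
    _ = ∫ x in s, (u ∘ T^[k]) x ∂μ := by rw [hs.2]; rfl

end lem


/-- For a measure-preserving `T` on a probability space and `k ≥ 1`, with
`F_k` the σ-algebra of `T^k`-invariant sets and `F_1` that of `T`-invariant sets,
`(1/k)·∑_{i<k} E[f ∘ T^i | F_k] = E[f | F_1]` for every `f ∈ L¹`. -/
theorem stmt8 {X : Type*} [m0 : MeasurableSpace X] (μ : Measure X) [IsProbabilityMeasure μ]
    (T : X → X) (hT : MeasurePreserving T μ μ) (k : ℕ) (hk : 1 ≤ k)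
    (f : X → ℝ) (hf : Integrable f μ) :
    (k : ℝ)⁻¹ • ∑ i ∈ Finset.range k, μ[f ∘ T^[i] | invSigma m0 T^[k]] =ᵐ[μ]
      μ[f | invSigma m0 T] := by
  have hm : invSigma m0 T ≤ m0 := invSigma_le m0 T
  have hmk : invSigma m0 (T^[k]) ≤ m0 := invSigma_le m0 (T^[k])
  set a : ℕ → X → ℝ := fun i => μ[f ∘ T^[i] | invSigma m0 (T^[k])] with ha_def
  set g : X → ℝ := (k : ℝ)⁻¹ • ∑ i ∈ Finset.range k, a i with hg_def
  have hfi : ∀ i : ℕ, Integrable (f ∘ T^[i]) μ :=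
    fun i => ((hT.iterate i).integrable_comp hf.aestronglyMeasurable).2 hf
  have ha_int : ∀ i, Integrable (a i) μ := fun i => integrable_condExp
  have hgx : ∀ x, g x = (k : ℝ)⁻¹ * ∑ i ∈ Finset.range k, a i x := by
    intro x
    simp [hg_def, Finset.sum_apply, smul_eq_mul]
  have hg_int : Integrable g μ := by
    have : Integrable (∑ i ∈ Finset.range k, a i) μ := by
      have := integrable_finset_sum (μ := μ) (Finset.range k) (fun i _ => ha_int i)
      rw [Finset.sum_fn]
      exact this
    exact this.smul ((k : ℝ)⁻¹)
  -- a.e. shift invariance of g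
  have hshift : g ∘ T =ᵐ[μ] g := by
    have h1 : ∀ i : ℕ, (a i) ∘ T =ᵐ[μ] a (i + 1) := by
      intro i
      have h := condexp_comp_ae (μ := μ) hT hk (hfi i)
      have e : (f ∘ T^[i]) ∘ T = f ∘ T^[i + 1] := by
        rw [Function.comp_assoc, ← Function.iterate_succ]
      rwa [e] at h
    have hk0 : a k =ᵐ[μ] a 0 := by
      have h := condexp_iterate_ae (μ := μ) hT k (hu := hf)
      have e0 : f ∘ T^[(0 : ℕ)] = f := by simp
      have ek : (f ∘ T^[k]) = f ∘ T^[k] := rfl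
      simp only [ha_def, e0]
      exact h.symm
    have H1 : ∀ᵐ x ∂μ, ∀ i : ℕ, a i (T x) = a (i + 1) x := ae_all_iff.2 fun i => h1 i
    filter_upwards [H1, hk0] with x hx1 hx0
    have e1 : ∑ i ∈ Finset.range k, a i (T x) = ∑ i ∈ Finset.range k, a (i + 1) x :=
      Finset.sum_congr rfl fun i _ => hx1 i
    have e2 : ∑ i ∈ Finset.range (k + 1), a i x
        = ∑ i ∈ Finset.range k, a (i + 1) x + a 0 x := Finset.sum_range_succ' (fun i => a i x) k
    have e3 : ∑ i ∈ Finset.range (k + 1), a i x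
        = ∑ i ∈ Finset.range k, a i x + a k x := Finset.sum_range_succ (fun i => a i x) k
    have e4 : ∑ i ∈ Finset.range k, a (i + 1) x = ∑ i ∈ Finset.range k, a i x := by
      have := e2.symm.trans e3
      rw [hx0] at this
      exact add_right_cancel this
    show g (T x) = g x
    rw [hgx, hgx, e1, e4]
  have hiter : ∀ n : ℕ, g ∘ T^[n] =ᵐ[μ] g := by
    intro n
    induction n with
    | zero => simp
    | succ n ih =>
      have e : g ∘ T^[n + 1] = (g ∘ T) ∘ T^[n] := by
        rw [Function.comp_assoc, ← Function.iterate_succ']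
      rw [e]
      exact ((hT.iterate n).quasiMeasurePreserving.ae_eq_comp hshift).trans ih
  have hall : ∀ᵐ x ∂μ, ∀ n : ℕ, g (T^[n] x) = g x := ae_all_iff.2 fun n => hiter n
  set G : X → ℝ := fun x => limsup (fun n => g (T^[n] x)) atTop with hG_def
  have hGg : G =ᵐ[μ] g := by
    filter_upwards [hall] with x hx
    show limsup (fun n => g (T^[n] x)) atTop = g x
    rw [show (fun n => g (T^[n] x)) = fun _ => g x from funext hx, limsup_const]
  have hGT : G ∘ T = G := by
    funext x
    show limsup (fun n => g (T^[n] (T x))) atTop = limsup (fun n => g (T^[n] x)) atTop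
    have e : (fun n => g (T^[n] (T x))) = fun n => g (T^[n + 1] x) := by
      funext n; rw [Function.iterate_succ_apply]
    rw [e]
    exact limsup_nat_add (fun n => g (T^[n] x)) 1
  have hg_meas : Measurable g := by
    have hsum : Measurable fun x => ∑ i ∈ Finset.range k, a i x :=
      Finset.measurable_sum _ fun i _ => (stronglyMeasurable_condExp.mono hmk).measurable
    have : Measurable fun x => (k : ℝ)⁻¹ * ∑ i ∈ Finset.range k, a i x := hsum.const_mul _
    convert this using 1
    funext x
    exact hgx x
  have hG_meas : Measurable G :=
    Measurable.limsup fun n => hg_meas.comp (hT.measurable.iterate n)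
  have hGm : StronglyMeasurable[invSigma m0 T] G := by
    refine Measurable.stronglyMeasurable ?_
    intro s hs
    refine ⟨hG_meas hs, ?_⟩
    rw [← Set.preimage_comp, hGT]
  refine ae_eq_condExp_of_forall_setIntegral_eq hm hf
    (fun s _ _ => hg_int.integrableOn) (fun s hs _ => ?_) ⟨G, hGm, hGg.symm⟩
  have hsk : MeasurableSet[invSigma m0 (T^[k])] s := invSigma_le_iterate m0 T k s hs
  have hs0 : MeasurableSet s := hs.1
  have key : ∀ i ∈ Finset.range k, ∫ x in s, a i x ∂μ = ∫ x in s, f x ∂μ := by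
    intro i _
    rw [ha_def]
    rw [setIntegral_condExp hmk (hfi i) hsk]
    have hinv : T^[i] ⁻¹' s = s := (invSigma_le_iterate m0 T i s hs).2
    calc ∫ x in s, (f ∘ T^[i]) x ∂μ
        = ∫ x in T^[i] ⁻¹' s, f (T^[i] x) ∂μ := by rw [hinv]; rfl
      _ = ∫ x in s, f x ∂μ := setIntegral_comp_mp (hT.iterate i) hs0 hf.aestronglyMeasurable
  have hgi : ∫ x in s, g x ∂μ = (k : ℝ)⁻¹ * ∑ i ∈ Finset.range k, ∫ x in s, a i x ∂μ := by
    rw [show (fun x => g x) = fun x => (k : ℝ)⁻¹ * ∑ i ∈ Finset.range k, a i x from funext hgx]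
    rw [integral_const_mul, integral_finset_sum _ fun i _ => (ha_int i).integrableOn]
  rw [hgi, Finset.sum_congr rfl key, Finset.sum_const, Finset.card_range, nsmul_eq_mul,
    ← mul_assoc, inv_mul_cancel₀ (by exact_mod_cast Nat.one_le_iff_ne_zero.mp hk), one_mul]
end
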